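/- There do not exist complex numbers z₁, z₂, z₃, z₄, z₅, z₆ satisfying all of: z₁ - z₃z₄ + 1 = 0 with |z₁|² - |z₃z₄|² + 1 = 0; z₄ - z₁z₂ + 1 = 0 with |z₄|² - |z₁z₂|² + 1 = 0; and z₂ - z₄z₅ + 1 = 0 with |z₂|² - |z₄z₅|² + 1 = 0. -/

import Mathlib

lemma re_zero_aux {z w : ℂ} (h1 : z - w + 1 = 0)
    (h2 : ‖z‖ ^ 2 - ‖w‖ ^ 2 + 1 = 0) : z.re = 0 := by
  have hw : w = z + 1 := by linear_combination -h1
  subst hw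
  rw [Complex.sq_norm, Complex.sq_norm, Complex.normSq_apply, Complex.normSq_apply] at h2
  simp only [Complex.add_re, Complex.add_im, Complex.one_re, Complex.one_im] at h2
  linarith

theorem pentagon_not_cpsd_minimal :
    ¬ ∃ z₁ z₂ z₃ z₄ z₅ z₆ : ℂ,
      (z₁ - z₃ * z₄ + 1 = 0 ∧ ‖z₁‖ ^ 2 - ‖z₃ * z₄‖ ^ 2 + 1 = 0) ∧
      (z₄ - z₁ * z₂ + 1 = 0 ∧ ‖z₄‖ ^ 2 - ‖z₁ * z₂‖ ^ 2 + 1 = 0) ∧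
      (z₂ - z₄ * z₅ + 1 = 0 ∧ ‖z₂‖ ^ 2 - ‖z₄ * z₅‖ ^ 2 + 1 = 0) := by
  rintro ⟨z₁, z₂, z₃, z₄, z₅, z₆, ⟨e1, a1⟩, ⟨e2, a2⟩, ⟨e3, a3⟩⟩
  have r1 : z₁.re = 0 := re_zero_aux e1 a1
  have r4 : z₄.re = 0 := re_zero_aux e2 a2
  have r2 : z₂.re = 0 := re_zero_aux e3 a3
  -- imaginary part of e2 gives z₄.im = 0
  have h4im : z₄.im = 0 := by
    have := congrArg Complex.im e2
    simp only [Complex.add_im, Complex.sub_im, Complex.mul_im, Complex.one_im,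
      Complex.zero_im] at this
    rw [r1, r2] at this
    linarith
  have h4 : z₄ = 0 := Complex.ext r4 h4im
  -- then e1 gives z₁ = -1, contradicting r1
  rw [h4, mul_zero] at e1
  have : z₁ = -1 := by linear_combination e1
  rw [this] at r1
  norm_num at r1
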